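/- Let n ≥ 1. Let s : ℝ → ℝ satisfy 0 < s(a) ≤ 1 for every a > 0, s antitone and convex on (0,∞). Let g : ℝ → ℝ satisfy 0 < g(t) < 1 for every t > 0, g antitone and convex on (0,∞). Let v, u, α, β : Fin n → ℝ be positive nondecreasing tuples such that for every k = 1,…,n: Σ_{i=1}^k α i ≤ Σ_{i=1}^k β i and Σ_{i=1}^k v i ≤ Σ_{i=1}^k u i. Let q₁, q₂ : {1,…,n} → ℝ be nonnegative with Σ_{m=1}^n q₁(m) = Σ_{m=1}^n q₂(m) = 1 and Σ_{m=k}^n q₂(m) ≤ Σ_{m=k}^n q₁(m) for every k. Then Σ_{m=1}^n q₁(m) · ∏_{i=1}^m (1 − g(v i)·s(α i)) ≤ Σ_{m=1}^n q₂(m) · ∏_{i=1}^m (1 − g(u i)·s(β i)). -/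

import Mathlib

open Finset

/-- Sum of the first `k` entries of the tuple `a`. -/
noncomputable def prefixSum {n : ℕ} (a : Fin n → ℝ) (k : ℕ) : ℝ :=
  ∑ i ∈ Finset.univ.filter (fun i : Fin n => (i : ℕ) < k), a i

/-- Product of the first `m` entries of the tuple `c`. -/
noncomputable def prefixProd {n : ℕ} (c : Fin n → ℝ) (m : ℕ) : ℝ :=
  ∏ i ∈ Finset.univ.filter (fun i : Fin n => (i : ℕ) < m), c i

section Aux

lemma concave_log_one_sub (φ : ℝ → ℝ) (c : ℝ) (hc : 0 < c)
    (hφconv : ConvexOn ℝ (Set.Ioi 0) φ)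
    (hlt : ∀ x > 0, c * φ x < 1) :
    ConcaveOn ℝ (Set.Ioi 0) (fun x => Real.log (1 - c * φ x)) := by
  refine ⟨convex_Ioi 0, ?_⟩
  intro x hx y hy p q hp hq hpq
  have hx' : (0:ℝ) < x := hx
  have hy' : (0:ℝ) < y := hy
  have hA : 0 < 1 - c * φ x := by linarith [hlt x hx']
  have hB : 0 < 1 - c * φ y := by linarith [hlt y hy']
  have hxy : 0 < p * x + q * y := by
    rcases eq_or_lt_of_le hp with h | h
    · simp [← h] at hpq ⊢; nlinarith
    · nlinarith [mul_nonneg hq hy'.le]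
  have hcomb : 0 < p * (1 - c * φ x) + q * (1 - c * φ y) := by
    rcases eq_or_lt_of_le hp with h | h
    · simp [← h] at hpq ⊢; nlinarith
    · nlinarith [mul_nonneg hq hB.le]
  have hφc := hφconv.2 hx hy hp hq hpq
  simp only [smul_eq_mul] at hφc ⊢
  have key1 : p * Real.log (1 - c * φ x) + q * Real.log (1 - c * φ y) ≤
      Real.log (p * (1 - c * φ x) + q * (1 - c * φ y)) := by
    have := strictConcaveOn_log_Ioi.concaveOn.2 (Set.mem_Ioi.2 hA) (Set.mem_Ioi.2 hB) hp hq hpq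
    simpa using this
  have key2 : Real.log (p * (1 - c * φ x) + q * (1 - c * φ y)) ≤
      Real.log (1 - c * φ (p * x + q * y)) := by
    rw [Real.log_le_log_iff hcomb (by nlinarith [hlt (p * x + q * y) hxy])]
    nlinarith
  linarith

lemma concave_slope_le {h : ℝ → ℝ} (hh : ConcaveOn ℝ (Set.Ioi 0) h)
    {a b c d : ℝ} (ha : 0 < a) (hac : a ≤ c) (hbd : b ≤ d) (hab : a < b) (hcd : c < d) :
    (h d - h c) / (d - c) ≤ (h b - h a) / (b - a) := by
  have hneg : ConvexOn ℝ (Set.Ioi 0) (-h) := hh.neg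
  have had : a < d := lt_of_le_of_lt hac hcd
  have hb0 : (0:ℝ) < b := lt_trans ha hab
  have hc0 : (0:ℝ) < c := lt_of_lt_of_le ha hac
  have hd0 : (0:ℝ) < d := lt_trans ha had
  have step1 : (h d - h a) / (d - a) ≤ (h b - h a) / (b - a) := by
    have := hneg.secant_mono (Set.mem_Ioi.2 ha) (Set.mem_Ioi.2 hb0) (Set.mem_Ioi.2 hd0)
      hab.ne' had.ne' hbd
    simp only [Pi.neg_apply] at this
    have e1 : (-h b - -h a) / (b - a) = -((h b - h a) / (b - a)) := by ring
    have e2 : (-h d - -h a) / (d - a) = -((h d - h a) / (d - a)) := by ring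
    rw [e1, e2] at this
    linarith
  have step2 : (h d - h c) / (d - c) ≤ (h d - h a) / (d - a) := by
    have := hneg.secant_mono (Set.mem_Ioi.2 hd0) (Set.mem_Ioi.2 ha) (Set.mem_Ioi.2 hc0)
      had.ne hcd.ne hac
    simp only [Pi.neg_apply] at this
    have e1 : (-h a - -h d) / (a - d) = (h d - h a) / (a - d) := by ring
    have e2 : (-h c - -h d) / (c - d) = (h d - h c) / (c - d) := by ring
    rw [e1, e2, show a - d = -(d - a) by ring, show c - d = -(d - c) by ring,
      div_neg, div_neg] at this
    linarith
  linarith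

lemma cross_log (φx φy c c' : ℝ) (h1 : 0 < c') (h2 : c' ≤ c) (h3 : 0 < φy) (h4 : φy ≤ φx)
    (h5 : c * φx < 1) :
    Real.log (1 - c' * φy) - Real.log (1 - c' * φx) ≤
      Real.log (1 - c * φy) - Real.log (1 - c * φx) := by
  have hc : 0 < c := lt_of_lt_of_le h1 h2
  have p1 : 0 < 1 - c * φx := by linarith
  have p2 : 0 < 1 - c * φy := by nlinarith
  have p3 : 0 < 1 - c' * φx := by nlinarith
  have p4 : 0 < 1 - c' * φy := by nlinarith
  have key : (1 - c' * φy) * (1 - c * φx) ≤ (1 - c * φy) * (1 - c' * φx) := by nlinarith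
  have := (Real.log_le_log_iff (by positivity) (by positivity)).2 key
  rw [Real.log_mul p4.ne' p1.ne', Real.log_mul p2.ne' p3.ne'] at this
  linarith

lemma filter_lt_succ' {n k : ℕ} (hk : k < n) :
    (Finset.univ.filter (fun i : Fin n => (i : ℕ) < k + 1)) =
      insert ⟨k, hk⟩ (Finset.univ.filter (fun i : Fin n => (i : ℕ) < k)) := by
  ext i
  simp only [mem_filter, mem_univ, true_and, mem_insert, Fin.ext_iff]
  omega

lemma core_sum {n : ℕ} (h : Fin n → ℝ → ℝ) (a b : Fin n → ℝ)
    (ha : ∀ i, 0 < a i) (hb : ∀ i, 0 < b i)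
    (ham : Monotone a) (hbm : Monotone b)
    (hconc : ∀ i, ConcaveOn ℝ (Set.Ioi 0) (h i))
    (hmono : ∀ i, ∀ x y : ℝ, 0 < x → x ≤ y → h i x ≤ h i y)
    (hcross : ∀ i j : Fin n, i ≤ j → ∀ x y : ℝ, 0 < x → x < y →
      h j y - h j x ≤ h i y - h i x)
    (m : ℕ) (hm : m ≤ n)
    (hmaj : ∀ k, 1 ≤ k → k ≤ m →
      ∑ i ∈ Finset.univ.filter (fun i : Fin n => (i : ℕ) < k), a i ≤
        ∑ i ∈ Finset.univ.filter (fun i : Fin n => (i : ℕ) < k), b i) :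
    ∑ i ∈ Finset.univ.filter (fun i : Fin n => (i : ℕ) < m), h i (a i) ≤
      ∑ i ∈ Finset.univ.filter (fun i : Fin n => (i : ℕ) < m), h i (b i) := by
  classical
  rcases Nat.eq_zero_or_pos m with rfl | hm1
  · simp
  obtain ⟨m', rfl⟩ : ∃ m', m = m' + 1 := ⟨m - 1, (Nat.succ_pred_eq_of_pos hm1).symm⟩
  obtain ⟨ε, hε, hsep⟩ : ∃ ε : ℝ, 0 < ε ∧ ∀ i, a i ≠ b i → ε ≤ |a i - b i| := by
    rcases (Finset.univ.filter fun i : Fin n => a i ≠ b i).eq_empty_or_nonempty with he | hne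
    · refine ⟨1, one_pos, fun i hi => ?_⟩
      have hmem : i ∈ Finset.univ.filter fun i : Fin n => a i ≠ b i :=
        mem_filter.2 ⟨mem_univ i, hi⟩
      rw [he] at hmem
      exact absurd hmem (Finset.notMem_empty i)
    · refine ⟨(Finset.univ.filter fun i : Fin n => a i ≠ b i).inf' hne fun i => |a i - b i|,
        ?_, fun i hi => Finset.inf'_le _ (mem_filter.2 ⟨mem_univ i, hi⟩)⟩
      rw [Finset.lt_inf'_iff]
      intro i hi
      exact abs_pos.2 (sub_ne_zero.2 (mem_filter.1 hi).2)
  set mi : Fin n → ℝ := fun i => min (a i) (b i) with hmi_def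
  set Mi : Fin n → ℝ := fun i => max (max (a i) (b i)) (mi i + ε) with hMi_def
  set t : Fin n → ℝ := fun i => (h i (Mi i) - h i (mi i)) / (Mi i - mi i) with ht_def
  have hmi_pos : ∀ i, 0 < mi i := fun i => lt_min (ha i) (hb i)
  have hltMm : ∀ i, mi i < Mi i := fun i =>
    lt_of_lt_of_le (lt_add_of_pos_right _ hε) (le_max_right _ _)
  have hmim : Monotone mi := ham.min hbm
  have hMim : Monotone Mi := (ham.max hbm).max (hmim.add_const ε)
  have ht_nonneg : ∀ i, 0 ≤ t i := fun i =>
    div_nonneg (sub_nonneg.2 (hmono i _ _ (hmi_pos i) (hltMm i).le)) (sub_nonneg.2 (hltMm i).le)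
  have ht_anti : ∀ i j : Fin n, i ≤ j → t j ≤ t i := by
    intro i j hij
    have hpos : (0:ℝ) < Mi j - mi j := sub_pos.2 (hltMm j)
    have s1 : (h j (Mi j) - h j (mi j)) / (Mi j - mi j) ≤
        (h i (Mi j) - h i (mi j)) / (Mi j - mi j) :=
      div_le_div_of_nonneg_right (hcross i j hij (mi j) (Mi j) (hmi_pos j) (hltMm j)) hpos.le
    have s2 : (h i (Mi j) - h i (mi j)) / (Mi j - mi j) ≤
        (h i (Mi i) - h i (mi i)) / (Mi i - mi i) :=
      concave_slope_le (hconc i) (hmi_pos i) (hmim hij) (hMim hij) (hltMm i) (hltMm j)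
    exact s1.trans s2
  have hkey : ∀ i, t i * (b i - a i) ≤ h i (b i) - h i (a i) := by
    intro i
    rcases lt_trichotomy (a i) (b i) with hlt | heq | hgt
    · have hgap : ε ≤ b i - a i := by
        have := hsep i hlt.ne
        rwa [abs_of_neg (sub_neg.2 hlt), neg_sub] at this
      have e1 : mi i = a i := min_eq_left hlt.le
      have e2 : Mi i = b i := by
        rw [hMi_def]
        simp only [e1]
        rw [max_eq_left (le_sup_of_le_right (by linarith : a i + ε ≤ b i)),
          max_eq_right hlt.le]
      rw [ht_def]
      simp only [e1, e2]
      rw [div_mul_cancel₀]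
      exact sub_ne_zero.2 hlt.ne'
    · simp [heq]
    · have hgap : ε ≤ a i - b i := by
        have := hsep i hgt.ne'
        rwa [abs_of_pos (sub_pos.2 hgt)] at this
      have e1 : mi i = b i := min_eq_right hgt.le
      have e2 : Mi i = a i := by
        rw [hMi_def]
        simp only [e1]
        rw [max_eq_left (le_sup_of_le_left (by linarith : b i + ε ≤ a i)),
          max_eq_left hgt.le]
      rw [ht_def]
      simp only [e1, e2]
      have hne : a i - b i ≠ 0 := sub_ne_zero.2 hgt.ne'
      have e : (h i (a i) - h i (b i)) / (a i - b i) * (b i - a i) =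
          h i (b i) - h i (a i) := by
        field_simp
        ring
      exact e.le
  have hD : ∀ k, k < m' + 1 →
      0 ≤ ∑ i ∈ Finset.univ.filter (fun i : Fin n => (i : ℕ) < k + 1), (b i - a i) := by
    intro k hk
    rw [Finset.sum_sub_distrib]
    have := hmaj (k + 1) (Nat.le_add_left 1 k) hk
    linarith
  have main : ∀ k : ℕ, ∀ hk : k < m' + 1,
      t ⟨k, lt_of_lt_of_le hk hm⟩ *
          ∑ i ∈ Finset.univ.filter (fun i : Fin n => (i : ℕ) < k + 1), (b i - a i) ≤
        ∑ i ∈ Finset.univ.filter (fun i : Fin n => (i : ℕ) < k + 1),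
          (h i (b i) - h i (a i)) := by
    intro k
    induction k with
    | zero =>
      intro hk
      have h0 : (0:ℕ) < n := lt_of_lt_of_le hk hm
      rw [filter_lt_succ' h0]
      have he : (Finset.univ.filter (fun i : Fin n => (i : ℕ) < 0)) = ∅ := by
        ext i; simp
      rw [he]
      simp only [Finset.sum_insert (Finset.notMem_empty _), Finset.sum_empty, add_zero]
      exact hkey _
    | succ k ih =>
      intro hk
      have hk' : k < m' + 1 := Nat.lt_of_succ_lt hk
      have hkn : k + 1 < n := lt_of_lt_of_le hk hm
      have hkn' : k < n := Nat.lt_of_succ_lt hkn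
      rw [filter_lt_succ' hkn, Finset.sum_insert (by simp), Finset.sum_insert (by simp)]
      have hDk := hD k hk'
      have hanti : t ⟨k + 1, hkn⟩ ≤ t ⟨k, hkn'⟩ :=
        ht_anti ⟨k, hkn'⟩ ⟨k + 1, hkn⟩ (by simp [Fin.le_def])
      have ihk := ih hk'
      have hkeyk := hkey ⟨k + 1, hkn⟩
      nlinarith [mul_le_mul_of_nonneg_right hanti hDk]
  have hfin := main m' (Nat.lt_succ_self m')
  have hDm := hD m' (Nat.lt_succ_self m')
  have hpos : 0 ≤ ∑ i ∈ Finset.univ.filter (fun i : Fin n => (i : ℕ) < m' + 1),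
      (h i (b i) - h i (a i)) := by
    have := mul_nonneg (ht_nonneg ⟨m', lt_of_lt_of_le (Nat.lt_succ_self m') hm⟩) hDm
    linarith
  rw [Finset.sum_sub_distrib] at hpos
  linarith

lemma prod_le_prod_of_maj {n : ℕ} (φ : ℝ → ℝ)
    (hφpos : ∀ x > 0, 0 < φ x) (hφanti : AntitoneOn φ (Set.Ioi 0))
    (hφconv : ConvexOn ℝ (Set.Ioi 0) φ)
    (c : Fin n → ℝ) (hc : ∀ i, 0 < c i)
    (hca : ∀ i j : Fin n, i ≤ j → c j ≤ c i)
    (hclt : ∀ i, ∀ x > 0, c i * φ x < 1)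
    (a b : Fin n → ℝ) (ha : ∀ i, 0 < a i) (hb : ∀ i, 0 < b i)
    (ham : Monotone a) (hbm : Monotone b)
    (m : ℕ) (hm : m ≤ n)
    (hmaj : ∀ k, 1 ≤ k → k ≤ m →
      ∑ i ∈ Finset.univ.filter (fun i : Fin n => (i : ℕ) < k), a i ≤
        ∑ i ∈ Finset.univ.filter (fun i : Fin n => (i : ℕ) < k), b i) :
    ∏ i ∈ Finset.univ.filter (fun i : Fin n => (i : ℕ) < m), (1 - c i * φ (a i)) ≤
      ∏ i ∈ Finset.univ.filter (fun i : Fin n => (i : ℕ) < m), (1 - c i * φ (b i)) := by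
  have hfa : ∀ (i : Fin n) (x : ℝ), 0 < x → 0 < 1 - c i * φ x := fun i x hx => by
    linarith [hclt i x hx]
  have hP : 0 < ∏ i ∈ Finset.univ.filter (fun i : Fin n => (i : ℕ) < m), (1 - c i * φ (a i)) :=
    Finset.prod_pos fun i _ => hfa i _ (ha i)
  have hQ : 0 < ∏ i ∈ Finset.univ.filter (fun i : Fin n => (i : ℕ) < m), (1 - c i * φ (b i)) :=
    Finset.prod_pos fun i _ => hfa i _ (hb i)
  rw [← Real.log_le_log_iff hP hQ,
    Real.log_prod (fun i _ => (hfa i _ (ha i)).ne'),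
    Real.log_prod (fun i _ => (hfa i _ (hb i)).ne')]
  exact core_sum (fun i x => Real.log (1 - c i * φ x)) a b ha hb ham hbm
    (fun i => concave_log_one_sub φ (c i) (hc i) hφconv (hclt i))
    (fun i x y hx hxy => by
      have hy : (0:ℝ) < y := lt_of_lt_of_le hx hxy
      have h1 : φ y ≤ φ x := hφanti (Set.mem_Ioi.2 hx) (Set.mem_Ioi.2 hy) hxy
      have h2 : c i * φ y ≤ c i * φ x := mul_le_mul_of_nonneg_left h1 (hc i).le
      exact (Real.log_le_log_iff (hfa i x hx) (hfa i y hy)).2 (by linarith))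
    (fun i j hij x y hx hxy => by
      have hy : (0:ℝ) < y := lt_trans hx hxy
      exact cross_log (φ x) (φ y) (c i) (c j) (hc j) (hca i j hij) (hφpos y hy)
        (hφanti (Set.mem_Ioi.2 hx) (Set.mem_Ioi.2 hy) hxy.le) (hclt i x hx))
    m hm hmaj

lemma prefixProd_pos' {n : ℕ} {c : Fin n → ℝ} (h : ∀ i, 0 < c i) (m : ℕ) :
    0 < prefixProd c m :=
  Finset.prod_pos fun i _ => h i

lemma prefixProd_succ_le' {n : ℕ} {c : Fin n → ℝ} (h0 : ∀ i, 0 < c i) (h1 : ∀ i, c i ≤ 1)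
    (k : ℕ) : prefixProd c (k + 1) ≤ prefixProd c k := by
  unfold prefixProd
  rcases lt_or_ge k n with hk | hk
  · rw [filter_lt_succ' hk, Finset.prod_insert (by simp)]
    have hP : 0 < ∏ i ∈ Finset.univ.filter (fun i : Fin n => (i : ℕ) < k), c i :=
      Finset.prod_pos fun i _ => h0 i
    nlinarith [h1 ⟨k, hk⟩, h0 ⟨k, hk⟩]
  · have he : (Finset.univ.filter (fun i : Fin n => (i : ℕ) < k + 1)) =
        Finset.univ.filter (fun i : Fin n => (i : ℕ) < k) := by
      ext i
      simp only [mem_filter, mem_univ, true_and]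
      have := i.2
      omega
    rw [he]

lemma abel_step (n : ℕ) (r f : ℕ → ℝ)
    (hf : ∀ k, f (k + 1) ≤ f k)
    (htail : ∀ k, 1 ≤ k → k ≤ n → 0 ≤ ∑ m ∈ Finset.Icc k n, r m) :
    ∀ j k, 1 ≤ k → k ≤ n → n - k = j →
      ∑ m ∈ Finset.Icc k n, r m * f m ≤ (∑ m ∈ Finset.Icc k n, r m) * f k := by
  intro j
  induction j with
  | zero =>
    intro k h1 h2 h3
    have hkn : k = n := by omega
    subst hkn
    simp [Finset.Icc_self]
  | succ j ih =>
    intro k h1 h2 h3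
    have hsplit : Finset.Icc k n = insert k (Finset.Icc (k + 1) n) := by
      ext x
      simp only [Finset.mem_Icc, Finset.mem_insert]
      omega
    rw [hsplit, Finset.sum_insert (by simp), Finset.sum_insert (by simp)]
    have hih := ih (k + 1) (by omega) (by omega) (by omega)
    have ht := htail (k + 1) (by omega) (by omega)
    have hmul := mul_le_mul_of_nonneg_left (hf k) ht
    have e : (r k + ∑ m ∈ Finset.Icc (k + 1) n, r m) * f k =
        r k * f k + (∑ m ∈ Finset.Icc (k + 1) n, r m) * f k := by ring
    rw [e]
    linarith

end Aux

/-- Theorem 3.5 (corrected): largest claim amounts with random numbers of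
claims, usual stochastic order. -/
theorem stmt_5 {n : ℕ} (hn : 1 ≤ n) (s g : ℝ → ℝ)
    (hs_pos : ∀ a > 0, 0 < s a) (hs_le : ∀ a > 0, s a ≤ 1)
    (hs_anti : AntitoneOn s (Set.Ioi 0))
    (hs_conv : ConvexOn ℝ (Set.Ioi 0) s)
    (hg : ∀ t > 0, 0 < g t ∧ g t < 1)
    (hg_anti : AntitoneOn g (Set.Ioi 0))
    (hg_conv : ConvexOn ℝ (Set.Ioi 0) g)
    (v u α β : Fin n → ℝ)
    (hv : ∀ i, 0 < v i) (hu : ∀ i, 0 < u i)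
    (hα : ∀ i, 0 < α i) (hβ : ∀ i, 0 < β i)
    (hvm : Monotone v) (hum : Monotone u) (hαm : Monotone α) (hβm : Monotone β)
    (hmajα : ∀ k, 1 ≤ k → k ≤ n → prefixSum α k ≤ prefixSum β k)
    (hmajv : ∀ k, 1 ≤ k → k ≤ n → prefixSum v k ≤ prefixSum u k)
    (q₁ q₂ : ℕ → ℝ)
    (hq₁ : ∀ m ∈ Finset.Icc 1 n, 0 ≤ q₁ m) (hq₂ : ∀ m ∈ Finset.Icc 1 n, 0 ≤ q₂ m)
    (hq₁sum : ∑ m ∈ Finset.Icc 1 n, q₁ m = 1)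
    (hq₂sum : ∑ m ∈ Finset.Icc 1 n, q₂ m = 1)
    (hst : ∀ k, 1 ≤ k → k ≤ n →
      ∑ m ∈ Finset.Icc k n, q₂ m ≤ ∑ m ∈ Finset.Icc k n, q₁ m) :
    ∑ m ∈ Finset.Icc 1 n, q₁ m * prefixProd (fun i => 1 - g (v i) * s (α i)) m ≤
      ∑ m ∈ Finset.Icc 1 n, q₂ m * prefixProd (fun i => 1 - g (u i) * s (β i)) m := by
  classical
  set f : ℕ → ℝ := fun m => prefixProd (fun i => 1 - g (u i) * s (β i)) m with hf_def
  have hgs_lt : ∀ (t x : ℝ), 0 < t → 0 < x → g t * s x < 1 := by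
    intro t x ht hx
    have h1 := (hg t ht).1
    have h2 := (hg t ht).2
    have h3 := hs_pos x hx
    have h4 := hs_le x hx
    nlinarith
  -- pointwise comparison of prefix products for m ≤ n
  have hpoint : ∀ m, m ≤ n →
      prefixProd (fun i => 1 - g (v i) * s (α i)) m ≤ f m := by
    intro m hm
    have step1 : prefixProd (fun i => 1 - g (v i) * s (α i)) m ≤
        prefixProd (fun i => 1 - g (v i) * s (β i)) m := by
      unfold prefixProd
      exact prod_le_prod_of_maj s hs_pos hs_anti hs_conv (fun i => g (v i))
        (fun i => (hg (v i) (hv i)).1)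
        (fun i j hij => hg_anti (Set.mem_Ioi.2 (hv i)) (Set.mem_Ioi.2 (hv j)) (hvm hij))
        (fun i x hx => hgs_lt (v i) x (hv i) hx)
        α β hα hβ hαm hβm m hm
        (fun k h1 h2 => hmajα k h1 (h2.trans hm))
    have step2 : prefixProd (fun i => 1 - g (v i) * s (β i)) m ≤ f m := by
      have e1 : prefixProd (fun i => 1 - g (v i) * s (β i)) m =
          ∏ i ∈ Finset.univ.filter (fun i : Fin n => (i : ℕ) < m),
            (1 - s (β i) * g (v i)) := by
        unfold prefixProd
        exact Finset.prod_congr rfl fun i _ => by ring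
      have e2 : f m =
          ∏ i ∈ Finset.univ.filter (fun i : Fin n => (i : ℕ) < m),
            (1 - s (β i) * g (u i)) := by
        rw [hf_def]
        unfold prefixProd
        exact Finset.prod_congr rfl fun i _ => by ring
      rw [e1, e2]
      exact prod_le_prod_of_maj g (fun x hx => (hg x hx).1) hg_anti hg_conv
        (fun i => s (β i)) (fun i => hs_pos (β i) (hβ i))
        (fun i j hij => hs_anti (Set.mem_Ioi.2 (hβ i)) (Set.mem_Ioi.2 (hβ j)) (hβm hij))
        (fun i x hx => by
          have h1 := hs_pos (β i) (hβ i)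
          have h2 := hs_le (β i) (hβ i)
          have h3 := (hg x hx).1
          have h4 := (hg x hx).2
          nlinarith)
        v u hv hu hvm hum m hm
        (fun k h1 h2 => hmajv k h1 (h2.trans hm))
    exact step1.trans step2
  have hfpos : ∀ i : Fin n, 0 < 1 - g (u i) * s (β i) := fun i => by
    linarith [hgs_lt (u i) (β i) (hu i) (hβ i)]
  have hfle1 : ∀ i : Fin n, 1 - g (u i) * s (β i) ≤ 1 := fun i => by
    have h1 := (hg (u i) (hu i)).1
    have h2 := hs_pos (β i) (hβ i)
    nlinarith
  have hfdec : ∀ k, f (k + 1) ≤ f k := fun k =>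
    prefixProd_succ_le' hfpos hfle1 k
  have habel := abel_step n (fun m => q₁ m - q₂ m) f hfdec
    (fun k h1 h2 => by
      rw [Finset.sum_sub_distrib]
      linarith [hst k h1 h2])
    (n - 1) 1 le_rfl hn (by omega)
  have hsum0 : ∑ m ∈ Finset.Icc 1 n, (q₁ m - q₂ m) = 0 := by
    rw [Finset.sum_sub_distrib, hq₁sum, hq₂sum]
    ring
  rw [hsum0, zero_mul] at habel
  have hstep2 : ∑ m ∈ Finset.Icc 1 n, q₁ m * f m ≤ ∑ m ∈ Finset.Icc 1 n, q₂ m * f m := by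
    have e : ∑ m ∈ Finset.Icc 1 n, (q₁ m - q₂ m) * f m =
        ∑ m ∈ Finset.Icc 1 n, q₁ m * f m - ∑ m ∈ Finset.Icc 1 n, q₂ m * f m := by
      rw [← Finset.sum_sub_distrib]
      exact Finset.sum_congr rfl fun m _ => by ring
    linarith [habel, e ▸ habel]
  have hstep1 : ∑ m ∈ Finset.Icc 1 n, q₁ m * prefixProd (fun i => 1 - g (v i) * s (α i)) m ≤
      ∑ m ∈ Finset.Icc 1 n, q₁ m * f m := by
    refine Finset.sum_le_sum fun m hm => ?_
    have hmn : m ≤ n := (Finset.mem_Icc.1 hm).2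
    exact mul_le_mul_of_nonneg_left (hpoint m hmn) (hq₁ m hm)
  exact hstep1.trans hstep2
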